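/- If a hypothesis class H has Extended Littlestone dimension ELdim(H, k) >= t, then the tree shattering coefficient satisfies S(H, t) >= sum_{i=0}^{k+1} binom(t, i). -/

import Mathlib

/-- A depth-`t` `X`-valued tree: a family of maps `x_s : {-1,+1}^(s-1) → X`. -/
def XTree (X : Type*) (t : ℕ) := (s : Fin t) → (Fin s.val → ℤ) → X

/-- A sign path: a sequence with entries in `{-1,+1}`. -/
def IsSignPath {t : ℕ} (ε : Fin t → ℤ) : Prop := ∀ s, ε s = 1 ∨ ε s = -1

/-- `S(H, x)`: the set of sign paths realized by some hypothesis `h ∈ H` along the tree `x`,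
i.e. `ε_s = h (x_s (ε_1, …, ε_{s-1}))` for all `s`. -/
def realizedPaths {X : Type*} (H : Set (X → ℤ)) {t : ℕ} (x : XTree X t) :
    Set (Fin t → ℤ) :=
  {ε | IsSignPath ε ∧ ∃ h ∈ H, ∀ s : Fin t,
    ε s = h (x s (fun i => ε ⟨i.val, i.isLt.trans s.isLt⟩))}

/-- The tree shattering coefficient `S(H, t)`: the maximum of `|S(H, x)|` over
all depth-`t` `X`-valued trees `x`. -/
noncomputable def treeShatter {X : Type*} (H : Set (X → ℤ)) (t : ℕ) : ℕ :=
  ⨆ x : XTree X t, (realizedPaths H x).ncard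

/-- An extended mistake tree: leaves are labeled by hypotheses, and each internal node
carries an example `a : X`, the label `y ∈ {-1,+1}` of its dashed downward edge
(the dashed edge goes to the child labeled `y`), and the two subtrees
(first the `-1`-child, then the `+1`-child). -/
inductive EMT (X : Type*) where
  | leaf : (X → ℤ) → EMT X
  | node : X → ℤ → EMT X → EMT X → EMT X

/-- Validity of an extended mistake tree for the class `H`: the dashed-edge labels are in
`{-1,+1}` and every leaf is labeled by a hypothesis of `H` consistent with the
root-to-leaf path (and satisfying the accumulated constraint `P`). -/
def EMT.ValidFrom {X : Type*} (H : Set (X → ℤ)) (P : (X → ℤ) → Prop) : EMT X → Prop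
  | .leaf h => h ∈ H ∧ P h
  | .node a y tneg tpos => (y = 1 ∨ y = -1) ∧
      EMT.ValidFrom H (fun h => P h ∧ h a = -1) tneg ∧
      EMT.ValidFrom H (fun h => P h ∧ h a = 1) tpos

/-- The set of pairs `(number of solid edges, length)` of root-to-leaf paths of an
extended mistake tree. An edge to a child is solid iff that child is not the one the
dashed edge points to. -/
def EMT.paths {X : Type*} : EMT X → Set (ℕ × ℕ)
  | .leaf _ => {(0, 0)}
  | .node _ y tneg tpos =>
      (fun p => (p.1 + (if y = -1 then 0 else 1), p.2 + 1)) '' EMT.paths tneg ∪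
      (fun p => (p.1 + (if y = 1 then 0 else 1), p.2 + 1)) '' EMT.paths tpos

/-- A tree is `(k,m)`-difficult iff every root-to-leaf path using at most `k` solid
edges has length at least `m`. -/
def EMT.Difficult {X : Type*} (T : EMT X) (k m : ℕ) : Prop :=
  ∀ p ∈ T.paths, p.1 ≤ k → m ≤ p.2


namespace ELaux

variable {X : Type*}

/-- Walk the EMT according to the disagreement indicator `b`, outputting signs.
Once at a leaf, output the leaf hypothesis' value at `default`. -/
def walkList [Inhabited X] : EMT X → (ℕ → Bool) → ℕ → ℕ → List ℤ
  | _, _, _, 0 => []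
  | .leaf h, _, _, n+1 => List.replicate (n+1) (h default)
  | .node _ y l r, b, pos, n+1 =>
      (if b pos then -y else y) ::
        (if (if b pos then -y else y) = -1 then walkList l b (pos+1) n
         else walkList r b (pos+1) n)

/-- The leaf hypothesis reached by walking according to `b`. -/
def walkHyp : EMT X → (ℕ → Bool) → ℕ → (X → ℤ)
  | .leaf h, _, _ => h
  | .node _ y l r, b, pos =>
      if (if b pos then -y else y) = -1 then walkHyp l b (pos+1) else walkHyp r b (pos+1)

/-- The example at the node reached by the given sign sequence. -/
def query [Inhabited X] : EMT X → List ℤ → X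
  | .leaf _, _ => default
  | .node a _ _ _, [] => a
  | .node _ _ l r, c :: cs => if c = -1 then query l cs else query r cs

lemma walkList_length [Inhabited X] (T : EMT X) (b : ℕ → Bool) (pos n : ℕ) :
    (walkList T b pos n).length = n := by
  induction T generalizing pos n with
  | leaf h => cases n <;> simp [walkList]
  | node a y l r ihl ihr =>
      cases n with
      | zero => simp [walkList]
      | succ m =>
        simp only [walkList, List.length_cons]
        split <;> split <;> simp [ihl, ihr]

lemma walkHyp_mem {H : Set (X → ℤ)} (T : EMT X) (P : (X → ℤ) → Prop)
    (hT : T.ValidFrom H P) (b : ℕ → Bool) (pos : ℕ) :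
    walkHyp T b pos ∈ H ∧ P (walkHyp T b pos) := by
  induction T generalizing P pos with
  | leaf h => exact hT
  | node a y l r ihl ihr =>
      obtain ⟨hy, hl, hr⟩ := hT
      rcases hy with h1 | h1 <;> rcases Bool.eq_false_or_eq_true (b pos) with hb | hb <;>
        simp only [walkHyp, h1, hb, if_true, if_false] <;> norm_num <;>
        first
          | exact ⟨(ihl _ hl (pos+1)).1, (ihl _ hl (pos+1)).2.1⟩
          | exact ⟨(ihr _ hr (pos+1)).1, (ihr _ hr (pos+1)).2.1⟩

lemma walkHyp_at {H : Set (X → ℤ)} (a : X) (y : ℤ) (l r : EMT X)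
    (P : (X → ℤ) → Prop) (hT : (EMT.node a y l r).ValidFrom H P) (b : ℕ → Bool) (pos : ℕ) :
    walkHyp (EMT.node a y l r) b pos a = (if b pos then -y else y) := by
  obtain ⟨hy, hl, hr⟩ := hT
  rcases hy with h1 | h1 <;> rcases Bool.eq_false_or_eq_true (b pos) with hb | hb <;>
    simp only [walkHyp, h1, hb, if_true, if_false] <;> norm_num <;>
    first
      | exact (walkHyp_mem l _ hl b (pos+1)).2.2
      | exact (walkHyp_mem r _ hr b (pos+1)).2.2

lemma walk_consistent [Inhabited X] {H : Set (X → ℤ)} (T : EMT X) (P : (X → ℤ) → Prop)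
    (hT : T.ValidFrom H P) (b : ℕ → Bool) (pos n : ℕ) (i : ℕ) (hi : i < n) :
    (walkList T b pos n).get ⟨i, by rw [walkList_length]; exact hi⟩
      = walkHyp T b pos (query T ((walkList T b pos n).take i)) := by
  induction T generalizing P pos n i with
  | leaf h =>
      cases n with
      | zero => omega
      | succ m => simp [walkList, walkHyp, query]
  | node a y l r ihl ihr =>
      cases n with
      | zero => omega
      | succ m =>
        obtain ⟨hy, hl, hr⟩ := hT
        cases i with
        | zero =>
            simpa [walkList, query] using (walkHyp_at a y l r P ⟨hy, hl, hr⟩ b pos).symm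
        | succ j =>
            have hj : j < m := by omega
            by_cases hc : (if b pos then -y else y) = -1
            · simpa [walkList, walkHyp, query, hc] using ihl _ hl (pos+1) m j hj
            · simpa [walkList, walkHyp, query, hc] using ihr _ hr (pos+1) m j hj

lemma walk_sign [Inhabited X] {H : Set (X → ℤ)}
    (hsign : ∀ h ∈ H, ∀ a : X, h a = 1 ∨ h a = -1)
    (T : EMT X) (P : (X → ℤ) → Prop)
    (hT : T.ValidFrom H P) (b : ℕ → Bool) (pos n : ℕ) (i : ℕ) (hi : i < n) :
    (walkList T b pos n).get ⟨i, by rw [walkList_length]; exact hi⟩ = 1 ∨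
    (walkList T b pos n).get ⟨i, by rw [walkList_length]; exact hi⟩ = -1 := by
  induction T generalizing P pos n i with
  | leaf h =>
      cases n with
      | zero => omega
      | succ m => simpa [walkList] using hsign h hT.1 default
  | node a y l r ihl ihr =>
      cases n with
      | zero => omega
      | succ m =>
        obtain ⟨hy, hl, hr⟩ := hT
        cases i with
        | zero =>
            rcases hy with h1 | h1 <;> rcases Bool.eq_false_or_eq_true (b pos) with hb | hb <;>
              simp [walkList, h1, hb]
        | succ j =>
            have hj : j < m := by omega
            by_cases hc : (if b pos then -y else y) = -1
            · simpa [walkList, hc] using ihl _ hl (pos+1) m j hj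
            · simpa [walkList, hc] using ihr _ hr (pos+1) m j hj

/-- Number of `true`s of `b` in `[pos, t)`. -/
def cnt (b : ℕ → Bool) (pos t : ℕ) : ℕ := ((Finset.Ico pos t).filter (fun i => b i)).card

lemma cnt_succ (b : ℕ → Bool) (pos t : ℕ) (h : pos < t) :
    cnt b pos t = (if b pos then 1 else 0) + cnt b (pos+1) t := by
  unfold cnt
  have hins : Finset.Ico pos t = insert pos (Finset.Ico (pos+1) t) := by
    ext x; simp only [Finset.mem_Ico, Finset.mem_insert]; omega
  rw [hins, Finset.filter_insert]
  by_cases hb : b pos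
  · rw [if_pos hb, if_pos hb, Finset.card_insert_of_notMem (by simp)]; omega
  · rw [if_neg hb, if_neg hb, Nat.zero_add]

lemma cnt_zero {b : ℕ → Bool} {pos t : ℕ} (h : cnt b pos t = 0) :
    ∀ i, pos ≤ i → i < t → b i = false := by
  intro i h1 h2
  by_contra hb
  have : i ∈ (Finset.Ico pos t).filter (fun i => b i) := by
    simp only [Finset.mem_filter, Finset.mem_Ico]
    exact ⟨⟨h1, h2⟩, by simpa using hb⟩
  have := Finset.card_pos.mpr ⟨i, this⟩
  unfold cnt at h
  omega

lemma walk_inj [Inhabited X] {H : Set (X → ℤ)} (k t : ℕ) (T : EMT X) :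
    ∀ (P : (X → ℤ) → Prop), T.ValidFrom H P → ∀ (b b' : ℕ → Bool) (j pos : ℕ),
    (∀ p ∈ T.paths, p.1 + j ≤ k → t ≤ p.2 + pos) →
    j + cnt b pos t ≤ k + 1 → j + cnt b' pos t ≤ k + 1 →
    (∀ i, t ≤ i → b i = false) → (∀ i, t ≤ i → b' i = false) →
    walkList T b pos (t - pos) = walkList T b' pos (t - pos) →
    ∀ i, pos ≤ i → b i = b' i := by
  induction T with
  | leaf h =>
      intro P hT b b' j pos hinv hbn hbn' hbt hbt' heq i hi
      by_cases hj : j ≤ k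
      · have hpt : t ≤ pos := by
          have := hinv (0, 0) rfl (by omega)
          omega
        rw [hbt i (by omega), hbt' i (by omega)]
      · have hc0 : cnt b pos t = 0 := by omega
        have hc0' : cnt b' pos t = 0 := by omega
        by_cases hit : t ≤ i
        · rw [hbt i hit, hbt' i hit]
        · rw [cnt_zero hc0 i hi (by omega), cnt_zero hc0' i hi (by omega)]
  | node a y l r ihl ihr =>
      intro P hT b b' j pos hinv hbn hbn' hbt hbt' heq i hi
      obtain ⟨hy, hl, hr⟩ := hT
      by_cases hpt : t ≤ pos
      · rw [hbt i (by omega), hbt' i (by omega)]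
      · have hm : t - pos = (t - (pos+1)) + 1 := by omega
        rw [hm] at heq
        simp only [walkList] at heq
        rw [List.cons_eq_cons] at heq
        obtain ⟨h1, h2⟩ := heq
        have hbb : b pos = b' pos := by
          by_contra hne
          rcases hy with e | e <;>
            rcases Bool.eq_false_or_eq_true (b pos) with hb | hb <;>
            rcases Bool.eq_false_or_eq_true (b' pos) with hb2 | hb2 <;>
            simp only [hb, hb2, not_true, not_false_iff] at hne ⊢ <;>
            rw [hb, hb2, e] at h1 <;> norm_num at h1
        rw [← hbb] at h2
        have hcnt : cnt b pos t = (if b pos then 1 else 0) + cnt b (pos+1) t :=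
          cnt_succ b pos t (by omega)
        have hcnt' : cnt b' pos t = (if b pos then 1 else 0) + cnt b' (pos+1) t := by
          rw [hbb]; exact cnt_succ b' pos t (by omega)
        rcases Nat.eq_or_lt_of_le hi with hip | hip
        · rw [← hip]; exact hbb
        · by_cases hc : (if b pos then -y else y) = -1
          · rw [if_pos hc, if_pos hc] at h2
            have hsolid : (if y = -1 then (0:ℕ) else 1) = (if b pos then 1 else 0) := by
              rcases hy with e | e <;>
                rcases Bool.eq_false_or_eq_true (b pos) with hb | hb <;>
                rw [hb, e] at hc ⊢ <;> norm_num at hc <;> norm_num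
            refine ihl _ hl b b' (j + (if b pos then 1 else 0)) (pos+1) ?_
              (by omega) (by omega) hbt hbt' h2 i (by omega)
            intro p hp hple
            have hq : ((fun p : ℕ × ℕ => (p.1 + (if y = -1 then 0 else 1), p.2 + 1)) p)
                ∈ (EMT.node a y l r).paths := Or.inl ⟨p, hp, rfl⟩
            have := hinv _ hq (by simp only [hsolid]; omega)
            simp only at this
            omega
          · rw [if_neg hc, if_neg hc] at h2
            have hsolid : (if y = 1 then (0:ℕ) else 1) = (if b pos then 1 else 0) := by
              rcases hy with e | e <;>
                rcases Bool.eq_false_or_eq_true (b pos) with hb | hb <;>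
                rw [hb, e] at hc ⊢ <;> norm_num at hc <;> norm_num
            refine ihr _ hr b b' (j + (if b pos then 1 else 0)) (pos+1) ?_
              (by omega) (by omega) hbt hbt' h2 i (by omega)
            intro p hp hple
            have hq : ((fun p : ℕ × ℕ => (p.1 + (if y = 1 then 0 else 1), p.2 + 1)) p)
                ∈ (EMT.node a y l r).paths := Or.inr ⟨p, hp, rfl⟩
            have := hinv _ hq (by simp only [hsolid]; omega)
            simp only at this
            omega

lemma signPaths_finite (t : ℕ) : {ε : Fin t → ℤ | IsSignPath ε}.Finite := by
  apply Set.Finite.subset (Set.Finite.pi (fun _ : Fin t => Set.Finite.insert (1:ℤ) (Set.finite_singleton (-1))))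
  intro ε hε i _
  rcases hε i with h | h <;> simp [h]

lemma bdd {X : Type*} (H : Set (X → ℤ)) (t : ℕ) :
    BddAbove (Set.range fun x : XTree X t => (realizedPaths H x).ncard) := by
  refine ⟨({ε : Fin t → ℤ | IsSignPath ε}).ncard, ?_⟩
  rintro _ ⟨x, rfl⟩
  exact Set.ncard_le_ncard (fun ε hε => hε.1) (signPaths_finite t)

lemma realized_finite {X : Type*} (H : Set (X → ℤ)) {t : ℕ} (x : XTree X t) :
    (realizedPaths H x).Finite :=
  Set.Finite.subset (signPaths_finite t) (fun ε hε => hε.1)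

lemma le_treeShatter {X : Type*} (H : Set (X → ℤ)) {t N : ℕ} (x : XTree X t)
    (h : N ≤ (realizedPaths H x).ncard) : N ≤ treeShatter H t :=
  le_trans h (le_ciSup (bdd H t) x)

lemma ofFn_take (L : List ℤ) (s : ℕ) (hs : s ≤ L.length) :
    List.ofFn (fun i : Fin s => L.get ⟨i.1, lt_of_lt_of_le i.isLt hs⟩) = L.take s := by
  apply List.ext_get
  · simp [hs]
  · intro n h1 h2
    simp [List.get_ofFn, List.getElem_take]

lemma card_small_subsets (t k : ℕ) :
    ((Finset.univ : Finset (Fin t)).powerset.filter (fun B => B.card ≤ k + 1)).card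
      = ∑ i ∈ Finset.range (k + 2), t.choose i := by
  have hset : (Finset.univ : Finset (Fin t)).powerset.filter (fun B => B.card ≤ k + 1)
      = (Finset.range (k + 2)).biUnion
          (fun i => Finset.powersetCard i (Finset.univ : Finset (Fin t))) := by
    ext B
    simp only [Finset.mem_filter, Finset.mem_powerset, Finset.mem_biUnion, Finset.mem_range,
      Finset.mem_powersetCard]
    constructor
    · rintro ⟨hB, hc⟩
      exact ⟨B.card, by omega, hB, rfl⟩
    · rintro ⟨i, hi, hB, rfl⟩
      exact ⟨hB, by omega⟩
  rw [hset, Finset.card_biUnion]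
  · apply Finset.sum_congr rfl
    intro i _
    rw [Finset.card_powersetCard, Finset.card_univ, Fintype.card_fin]
  · intro i _ j _ hij
    rw [Function.onFun, Finset.disjoint_left]
    intro B hB hB'
    rw [Finset.mem_powersetCard] at hB hB'
    exact hij (hB.2 ▸ hB'.2 ▸ rfl)

end ELaux

theorem stmt14 {X : Type*} (H : Set (X → ℤ))
    (hsign : ∀ h ∈ H, ∀ a : X, h a = 1 ∨ h a = -1)
    (k t : ℕ)
    (hELdim : ∃ T : EMT X, T.ValidFrom H (fun _ => True) ∧ T.Difficult k t) :
    ∑ i ∈ Finset.range (k + 2), t.choose i ≤ treeShatter H t := by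
  classical
  obtain ⟨T, hvalid, hdiff⟩ := hELdim
  cases T with
  | leaf h0 =>
      have ht : t = 0 := by
        have := hdiff (0, 0) rfl (Nat.zero_le k)
        omega
      subst ht
      have hsum : ∑ i ∈ Finset.range (k + 2), Nat.choose 0 i = 1 := by
        rw [Finset.sum_eq_single_of_mem 0 (by simp)]
        · rfl
        · intro i _ hne
          exact Nat.choose_eq_zero_of_lt (by omega)
      rw [hsum]
      set x : XTree X 0 := fun s _ => s.elim0 with hx
      have hne : (realizedPaths H x).Nonempty :=
        ⟨fun i => i.elim0, fun s => s.elim0, h0, hvalid.1, fun s => s.elim0⟩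
      refine ELaux.le_treeShatter H x ?_
      have := (Set.ncard_pos (ELaux.realized_finite H x)).mpr hne
      omega
  | node a y l r =>
      letI : Inhabited X := ⟨a⟩
      set T : EMT X := EMT.node a y l r with hTdef
      set bfun : Finset (Fin t) → ℕ → Bool :=
        fun B n => if h : n < t then decide ((⟨n, h⟩ : Fin t) ∈ B) else false with hbfun
      set x : XTree X t := fun _ pre => ELaux.query T (List.ofFn pre) with hxdef
      set f : Finset (Fin t) → (Fin t → ℤ) :=
        fun B s => (ELaux.walkList T (bfun B) 0 t).get
          ⟨s.1, by rw [ELaux.walkList_length]; exact s.isLt⟩ with hfdef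
      have hsup : ∀ B : Finset (Fin t), ∀ i, t ≤ i → bfun B i = false := by
        intro B i hi
        simp only [hbfun]
        rw [dif_neg (by omega)]
      have hcnt : ∀ B : Finset (Fin t), ELaux.cnt (bfun B) 0 t = B.card := by
        intro B
        unfold ELaux.cnt
        have himg : (Finset.Ico 0 t).filter (fun i => bfun B i) = B.image Fin.val := by
          ext i
          simp only [Finset.mem_filter, Finset.mem_Ico, Finset.mem_image]
          constructor
          · rintro ⟨⟨-, hit⟩, hb⟩
            refine ⟨⟨i, hit⟩, ?_, rfl⟩
            simp only [hbfun, dif_pos hit] at hb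
            simpa using hb
          · rintro ⟨j, hj, rfl⟩
            refine ⟨⟨Nat.zero_le _, j.isLt⟩, ?_⟩
            simp only [hbfun, dif_pos j.isLt]
            simpa using hj
        rw [himg, Finset.card_image_of_injective _ Fin.val_injective]
      -- every f B is realized
      have hreal : ∀ B : Finset (Fin t), f B ∈ realizedPaths H x := by
        intro B
        refine ⟨fun s => ELaux.walk_sign hsign T _ hvalid (bfun B) 0 t s.1 s.isLt,
          ELaux.walkHyp T (bfun B) 0, (ELaux.walkHyp_mem T _ hvalid (bfun B) 0).1, ?_⟩
        intro s
        have hlen : s.1 ≤ (ELaux.walkList T (bfun B) 0 t).length := by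
          rw [ELaux.walkList_length]; exact le_of_lt s.isLt
        have hq : x s (fun i => f B ⟨i.1, i.isLt.trans s.isLt⟩)
            = ELaux.query T ((ELaux.walkList T (bfun B) 0 t).take s.1) := by
          rw [hxdef]
          congr 1
          rw [← ELaux.ofFn_take _ s.1 hlen]
        rw [hq]
        exact ELaux.walk_consistent T _ hvalid (bfun B) 0 t s.1 s.isLt
      -- injectivity
      set S : Finset (Finset (Fin t)) :=
        (Finset.univ : Finset (Fin t)).powerset.filter (fun B => B.card ≤ k + 1) with hS
      have hinj : Set.InjOn f ↑S := by
        intro B hB B' hB' heq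
        simp only [hS, Finset.coe_filter, Set.mem_setOf_eq] at hB hB'
        have hLL : ELaux.walkList T (bfun B) 0 (t - 0) = ELaux.walkList T (bfun B') 0 (t - 0) := by
          simp only [Nat.sub_zero]
          apply List.ext_get (by rw [ELaux.walkList_length, ELaux.walkList_length])
          intro n h1 h2
          rw [ELaux.walkList_length] at h1
          exact congrFun heq ⟨n, h1⟩
        have hbb := ELaux.walk_inj k t T _ hvalid (bfun B) (bfun B') 0 0
          (fun p hp hple => by simpa using hdiff p hp (by omega))
          (by rw [Nat.zero_add, hcnt]; exact Nat.le_of_lt_succ (Nat.lt_succ_of_le hB.2))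
          (by rw [Nat.zero_add, hcnt]; exact Nat.le_of_lt_succ (Nat.lt_succ_of_le hB'.2))
          (hsup B) (hsup B') hLL
        ext s
        have := hbb s.1 (Nat.zero_le _)
        simp only [hbfun, dif_pos s.isLt] at this
        simpa using this
      calc ∑ i ∈ Finset.range (k + 2), t.choose i
          = S.card := (ELaux.card_small_subsets t k).symm
        _ = (f '' ↑S).ncard := by
            rw [Set.ncard_image_of_injOn hinj, Set.ncard_coe_finset]
        _ ≤ (realizedPaths H x).ncard := by
            apply Set.ncard_le_ncard _ (ELaux.realized_finite H x)
            rintro _ ⟨B, _, rfl⟩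
            exact hreal B
        _ ≤ treeShatter H t := le_ciSup (ELaux.bdd H t) x
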